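/- For every commutative ring A, the group of units of the Laurent series ring A((t)) decomposes uniquely as a product: every f in A((t))* can be written uniquely as f = f_- · a · t^n · f_+ where (on each connected component of Spec A) n is an integer, a ∈ A*, f_+ = 1 + Σ_{l>0} a_l t^l with a_l ∈ A, and f_- = 1 + Σ_{l<0} a_l t^l with each a_l nilpotent and almost all zero. In particular, if A is a local (or connected) commutative ring, every invertible Laurent series over A admits such a unique factorization. -/

import Mathlib

open HahnSeries

namespace LaurentFactor

variable {A : Type*} [CommRing A]

lemma sum_coeff {σ : Type*} (s : Finset σ) (F : σ → HahnSeries ℤ A) (i : ℤ) :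
    (∑ k ∈ s, F k).coeff i = ∑ k ∈ s, (F k).coeff i := by
  classical
  induction s using Finset.induction_on with
  | empty => simp
  | @insert a s ha ih =>
      rw [Finset.sum_insert ha, Finset.sum_insert ha, HahnSeries.coeff_add, ih]

lemma coeff_mul_mem (J K : Ideal A) {x y : HahnSeries ℤ A}
    (hx : ∀ i, x.coeff i ∈ J) (hy : ∀ i, y.coeff i ∈ K) (a : ℤ) :
    (x * y).coeff a ∈ J * K := by
  rw [HahnSeries.coeff_mul]
  exact Submodule.sum_mem _ fun ij _ => Ideal.mul_mem_mul (hx ij.1) (hy ij.2)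

lemma coeff_mul_mem_left (J : Ideal A) {x : HahnSeries ℤ A} (y : HahnSeries ℤ A)
    (hx : ∀ i, x.coeff i ∈ J) (a : ℤ) : (x * y).coeff a ∈ J := by
  rw [HahnSeries.coeff_mul]
  exact Submodule.sum_mem _ fun ij _ => Ideal.mul_mem_right _ _ (hx ij.1)

lemma coeff_mul_mem_right (J : Ideal A) (x : HahnSeries ℤ A) {y : HahnSeries ℤ A}
    (hy : ∀ i, y.coeff i ∈ J) (a : ℤ) : (x * y).coeff a ∈ J := by
  rw [HahnSeries.coeff_mul]
  exact Submodule.sum_mem _ fun ij _ => Ideal.mul_mem_left _ _ (hy ij.2)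

lemma coeff_pow_mem (J : Ideal A) {x : HahnSeries ℤ A} (hx : ∀ i, x.coeff i ∈ J) :
    ∀ (m : ℕ) (a : ℤ), (x ^ m).coeff a ∈ J ^ m
  | 0, a => by
      rw [pow_zero, pow_zero, Ideal.one_eq_top]; exact Submodule.mem_top
  | (m+1), a => by
      rw [pow_succ, pow_succ]
      exact coeff_mul_mem _ _ (coeff_pow_mem J hx m) hx a

lemma pow_eq_zero_of_coeff_mem {J : Ideal A} {m : ℕ} (hJ : J ^ m = ⊥) {x : HahnSeries ℤ A}
    (hx : ∀ i, x.coeff i ∈ J) : x ^ m = 0 := by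
  ext a
  have h := coeff_pow_mem J hx m a
  rw [hJ] at h
  simpa using h

lemma J_le_nilradical {J : Ideal A} {m : ℕ} (hJ : J ^ m = ⊥) {a : A} (ha : a ∈ J) :
    IsNilpotent a := by
  refine ⟨m, ?_⟩
  have : a ^ m ∈ J ^ m := Ideal.pow_mem_pow ha m
  rw [hJ] at this
  simpa using this

/-- product of two series supported in nonnegative degrees -/
lemma coeff_mul_nonneg {x y : HahnSeries ℤ A} (hx : ∀ i : ℤ, i < 0 → x.coeff i = 0)
    (hy : ∀ i : ℤ, i < 0 → y.coeff i = 0) : ∀ a : ℤ, a < 0 → (x * y).coeff a = 0 := by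
  intro a ha
  rw [HahnSeries.coeff_mul]
  apply Finset.sum_eq_zero
  rintro ⟨i, j⟩ hij
  rw [Finset.mem_addAntidiagonal] at hij
  obtain ⟨h1, h2, h3⟩ := hij
  rcases lt_or_ge i 0 with hi | hi
  · rw [hx i hi, zero_mul]
  rcases lt_or_ge j 0 with hj | hj
  · rw [hy j hj, mul_zero]
  exact absurd h3 (by intro h; omega)

/-- product of two series supported in negative degrees -/
lemma coeff_mul_negsupp {x y : HahnSeries ℤ A} (hx : ∀ i : ℤ, 0 ≤ i → x.coeff i = 0)
    (hy : ∀ i : ℤ, 0 ≤ i → y.coeff i = 0) : ∀ a : ℤ, 0 ≤ a → (x * y).coeff a = 0 := by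
  intro a ha
  rw [HahnSeries.coeff_mul]
  apply Finset.sum_eq_zero
  rintro ⟨i, j⟩ hij
  rw [Finset.mem_addAntidiagonal] at hij
  obtain ⟨h1, h2, h3⟩ := hij
  rcases le_or_gt 0 i with hi | hi
  · rw [hx i hi, zero_mul]
  rcases le_or_gt 0 j with hj | hj
  · rw [hy j hj, mul_zero]
  exact absurd h3 (by intro h; omega)

lemma coeff_pow_negsupp {x : HahnSeries ℤ A} (hx : ∀ i : ℤ, 0 ≤ i → x.coeff i = 0) :
    ∀ (k : ℕ), 1 ≤ k → ∀ a : ℤ, 0 ≤ a → (x ^ k).coeff a = 0 := by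
  intro k
  induction k with
  | zero => omega
  | succ k ih =>
      intro _ a ha
      rcases Nat.eq_or_lt_of_le (Nat.one_le_iff_ne_zero.mpr (Nat.succ_ne_zero k)) with h | h
      · rw [pow_succ]
        rcases Nat.eq_zero_or_pos k with rfl | hk
        · rw [pow_zero, one_mul]; exact hx a ha
        · exact coeff_mul_negsupp (fun i hi => ih hk i hi) hx a ha
      · rw [pow_succ]
        rcases Nat.eq_zero_or_pos k with rfl | hk
        · rw [pow_zero, one_mul]; exact hx a ha
        · exact coeff_mul_negsupp (fun i hi => ih hk i hi) hx a ha

lemma finite_neg_support (x : HahnSeries ℤ A) : {i : ℤ | i < 0 ∧ x.coeff i ≠ 0}.Finite := by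
  set S := {i : ℤ | i < 0 ∧ x.coeff i ≠ 0} with hS
  have hsub : S ⊆ x.support := fun i hi => hi.2
  rcases S.eq_empty_or_nonempty with h | h
  · rw [h]; exact Set.finite_empty
  · have hWF : S.IsWF := x.isWF_support.mono hsub
    apply Set.Finite.subset (Set.finite_Icc (hWF.min h) (-1))
    intro i hi
    refine ⟨Set.IsWF.min_le hWF h hi, ?_⟩
    have : i < 0 := hi.1
    omega

lemma span_nilpotent (s : Finset A) (h : ∀ a ∈ s, IsNilpotent a) :
    ∃ m, (Ideal.span (s : Set A)) ^ m = ⊥ := by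
  classical
  induction s using Finset.induction_on with
  | empty => exact ⟨1, by simp⟩
  | @insert a s ha ih =>
      obtain ⟨m, hm⟩ := ih (fun b hb => h b (Finset.mem_insert_of_mem hb))
      obtain ⟨k, hk⟩ := h a (Finset.mem_insert_self a s)
      refine ⟨k + m, le_bot_iff.mp ?_⟩
      rw [Finset.coe_insert, Ideal.span_insert]
      calc (Ideal.span {a} ⊔ Ideal.span (s : Set A)) ^ (k + m)
          ≤ Ideal.span {a} ^ k ⊔ (Ideal.span (s : Set A)) ^ m :=
            Ideal.sup_pow_add_le_pow_sup_pow
        _ ≤ ⊥ := by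
            rw [hm, Ideal.span_singleton_pow, Ideal.span_singleton_eq_bot.mpr hk]
            simp

lemma isNilpotent_of_coeff {x : HahnSeries ℤ A} (hfin : x.support.Finite)
    (hx : ∀ i, IsNilpotent (x.coeff i)) : IsNilpotent x := by
  classical
  set s : Finset A := hfin.toFinset.image x.coeff with hs
  obtain ⟨m, hm⟩ := span_nilpotent s (by
    intro a ha
    rw [hs, Finset.mem_image] at ha
    obtain ⟨i, _, rfl⟩ := ha
    exact hx i)
  refine ⟨m, pow_eq_zero_of_coeff_mem hm ?_⟩
  intro i
  by_cases hi : x.coeff i = 0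
  · rw [hi]; exact zero_mem _
  · refine Ideal.subset_span ?_
    rw [hs]
    simp only [Finset.coe_image, Set.mem_image, Finset.mem_coe, Set.Finite.mem_toFinset]
    exact ⟨i, by rwa [HahnSeries.mem_support], rfl⟩

lemma smul_single_one (c : A) (n : ℤ) :
    c • (HahnSeries.single n (1 : A)) = HahnSeries.single n c := by
  ext j
  rw [HahnSeries.coeff_smul, HahnSeries.coeff_single, HahnSeries.coeff_single]
  split <;> simp

/-- inverse of `1 + e` for nilpotent `e` supported in negative degrees -/
lemma exists_inv_one_add_neg {e : HahnSeries ℤ A} (hne : ∀ i : ℤ, 0 ≤ i → e.coeff i = 0)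
    (hnil : IsNilpotent e) :
    ∃ w : HahnSeries ℤ A, (∀ i : ℤ, 0 ≤ i → w.coeff i = 0) ∧ (1 + e) * (1 + w) = 1 ∧
      (∀ J : Ideal A, (∀ i, e.coeff i ∈ J) → ∀ i, w.coeff i ∈ J) := by
  obtain ⟨m, hm⟩ := hnil
  refine ⟨∑ k ∈ Finset.Ico 1 m, (-e) ^ k, ?_, ?_, ?_⟩
  · intro i hi
    rw [sum_coeff]
    apply Finset.sum_eq_zero
    intro k hk
    rw [Finset.mem_Ico] at hk
    have hneg : ∀ j : ℤ, 0 ≤ j → (-e).coeff j = 0 := by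
      intro j hj; rw [HahnSeries.coeff_neg, hne j hj, neg_zero]
    exact coeff_pow_negsupp hneg k hk.1 i hi
  · have hgeom : (∑ k ∈ Finset.range m, (-e) ^ k) * ((-e) - 1) = (-e) ^ m - 1 :=
      geom_sum_mul (-e) m
    have hem : (-e) ^ m = 0 := by
      rw [show -e = (-1 : HahnSeries ℤ A) * e by ring, mul_pow, hm, mul_zero]
    rw [hem, zero_sub] at hgeom
    rcases Nat.eq_zero_or_pos m with rfl | hmpos
    · have h10 : (1 : HahnSeries ℤ A) = 0 := by rw [← pow_zero e, hm]
      have : Subsingleton (HahnSeries ℤ A) := subsingleton_of_zero_eq_one h10.symm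
      exact Subsingleton.elim _ _
    · have h1 : (1 : HahnSeries ℤ A) + ∑ k ∈ Finset.Ico 1 m, (-e) ^ k
          = ∑ k ∈ Finset.range m, (-e) ^ k := by
        rw [Finset.range_eq_Ico, Finset.sum_eq_sum_Ico_succ_bot hmpos]
        simp
      rw [h1]
      linear_combination -hgeom
  · intro J hJ i
    rw [sum_coeff]
    apply Submodule.sum_mem
    intro k hk
    rw [Finset.mem_Ico] at hk
    have hJ' : ∀ j, (-e).coeff j ∈ J := fun j => by
      rw [HahnSeries.coeff_neg]; exact neg_mem (hJ j)
    have h := coeff_pow_mem J hJ' k i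
    have : J ^ k ≤ J := Ideal.pow_le_self (Nat.one_le_iff_ne_zero.mp hk.1)
    exact this h
lemma ofPowerSeries_coeff_neg (P : PowerSeries A) {i : ℤ} (hi : i < 0) :
    (HahnSeries.ofPowerSeries ℤ A P).coeff i = 0 := by
  rw [HahnSeries.ofPowerSeries_apply, HahnSeries.embDomain_notin_range]
  rintro ⟨m, hm⟩
  change ((m : ℕ) : ℤ) = i at hm
  omega

/-- the strictly negative part of a Hahn series over `ℤ` -/
def negPart (x : HahnSeries ℤ A) : HahnSeries ℤ A where
  coeff := fun i => if i < 0 then x.coeff i else 0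
  isPWO_support' := x.isPWO_support'.mono (by
    intro i hi
    by_cases h : i < 0
    · simpa [Function.mem_support, h] using hi
    · simp [Function.mem_support, h] at hi)

lemma factorE : ∀ (m : ℕ) (J : Ideal A) (h : HahnSeries ℤ A), J ^ m = ⊥ →
    (∀ i : ℤ, i < 0 → h.coeff i ∈ J) → IsUnit (h.coeff 0) →
    ∃ fm fp : HahnSeries ℤ A, fm.coeff 0 = 1 ∧ (∀ i : ℤ, 0 < i → fm.coeff i = 0) ∧
      (∀ i : ℤ, i < 0 → fm.coeff i ∈ J) ∧ (∀ i : ℤ, i < 0 → fp.coeff i = 0) ∧ h = fm * fp := by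
  intro m
  induction m using Nat.strong_induction_on with
  | _ m IH =>
  match m, IH with
  | 0, _ =>
    intro J h hJ _ _
    rw [pow_zero, Ideal.one_eq_top] at hJ
    have h10 : (1 : A) = 0 := by
      have : (1 : A) ∈ (⊥ : Ideal A) := hJ ▸ Submodule.mem_top
      simpa using this
    have : Subsingleton A := subsingleton_of_zero_eq_one h10.symm
    exact ⟨1, h, Subsingleton.elim _ _, fun i _ => Subsingleton.elim _ _,
      fun i _ => by rw [Subsingleton.elim ((1 : HahnSeries ℤ A).coeff i) (0:A)]; exact zero_mem J,
      fun i _ => Subsingleton.elim _ _, (one_mul h).symm⟩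
  | 1, _ =>
    intro J h hJ hneg _
    rw [pow_one] at hJ
    refine ⟨1, h, ?_, ?_, ?_, ?_, (one_mul h).symm⟩
    · simp [HahnSeries.coeff_one]
    · intro i hi; rw [HahnSeries.coeff_one, if_neg (by omega : ¬ i = 0)]
    · intro i hi; rw [HahnSeries.coeff_one, if_neg (by omega : ¬ i = 0)]; exact zero_mem J
    · intro i hi
      have := hneg i hi
      rw [hJ] at this
      simpa using this
  | (k+2), IH =>
    intro J h hJ hneg hu
    have hP : IsUnit (PowerSeries.mk fun n => h.coeff (n : ℤ)) := by
      rw [PowerSeries.isUnit_iff_constantCoeff]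
      simpa [PowerSeries.constantCoeff_mk] using hu
    obtain ⟨U, hU⟩ := hP
    set p : HahnSeries ℤ A := HahnSeries.ofPowerSeries ℤ A (U : PowerSeries A) with hp
    set pinv : HahnSeries ℤ A :=
      HahnSeries.ofPowerSeries ℤ A ((U⁻¹ : (PowerSeries A)ˣ) : PowerSeries A) with hpinv
    have hppinv : p * pinv = 1 := by
      rw [hp, hpinv, ← map_mul, Units.mul_inv, map_one]
    have hpco : ∀ n : ℕ, p.coeff (n : ℤ) = h.coeff (n : ℤ) := by
      intro n
      rw [hp, HahnSeries.ofPowerSeries_apply_coeff, hU, PowerSeries.coeff_mk]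
    have hpneg : ∀ i : ℤ, i < 0 → p.coeff i = 0 := fun i hi => ofPowerSeries_coeff_neg _ hi
    set d : HahnSeries ℤ A := h - p with hd
    have hdneg : ∀ i : ℤ, 0 ≤ i → d.coeff i = 0 := by
      intro i hi
      obtain ⟨n, rfl⟩ := Int.eq_ofNat_of_zero_le hi
      rw [hd, HahnSeries.coeff_sub, hpco n, sub_self]
    have hdJ : ∀ i, d.coeff i ∈ J := by
      intro i
      rcases lt_or_ge i 0 with hi | hi
      · rw [hd, HahnSeries.coeff_sub, hpneg i hi, sub_zero]; exact hneg i hi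
      · rw [hdneg i hi]; exact zero_mem _
    set δ : HahnSeries ℤ A := pinv * d with hδ
    have hδJ : ∀ i, δ.coeff i ∈ J := fun i => coeff_mul_mem_right J pinv hdJ i
    have hhp : h = p * (1 + δ) := by
      rw [mul_add, mul_one, hδ, ← mul_assoc, hppinv, one_mul, hd]; ring
    set δm : HahnSeries ℤ A := negPart δ with hδm
    have hδmco : ∀ i, δm.coeff i = if i < 0 then δ.coeff i else 0 := fun i => rfl
    have hδmneg : ∀ i : ℤ, 0 ≤ i → δm.coeff i = 0 := fun i hi => by
      rw [hδmco, if_neg (not_lt.mpr hi)]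
    have hδmJ : ∀ i, δm.coeff i ∈ J := fun i => by
      rw [hδmco]
      split
      · exact hδJ i
      · exact zero_mem _
    have hδmnil : IsNilpotent δm := ⟨k+2, pow_eq_zero_of_coeff_mem hJ hδmJ⟩
    obtain ⟨w, hwneg, hwinv, hwJmem⟩ := exists_inv_one_add_neg hδmneg hδmnil
    have hwJ : ∀ i, w.coeff i ∈ J := hwJmem J hδmJ
    set δp : HahnSeries ℤ A := δ - δm with hδp
    have hδppos : ∀ i : ℤ, i < 0 → δp.coeff i = 0 := by
      intro i hi; rw [hδp, HahnSeries.coeff_sub, hδmco, if_pos hi, sub_self]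
    have hδpJ : ∀ i, δp.coeff i ∈ J := fun i => by
      rw [hδp, HahnSeries.coeff_sub]; exact sub_mem (hδJ i) (hδmJ i)
    set v : HahnSeries ℤ A := (1 + w) * (1 + δ) with hv
    have hv2 : v = 1 + (δp + w * δp) := by
      have h1 : (1:HahnSeries ℤ A) + δ = (1 + δm) + δp := by rw [hδp]; ring
      rw [hv, h1, mul_add, mul_comm (1+w) (1+δm), hwinv]
      ring
    have hvnegJ2 : ∀ i : ℤ, i < 0 → v.coeff i ∈ J ^ 2 := by
      intro i hi
      rw [hv2, HahnSeries.coeff_add, HahnSeries.coeff_add, HahnSeries.coeff_one,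
        if_neg (by omega : ¬ i = 0), hδppos i hi, zero_add, zero_add]
      have := coeff_mul_mem J J hwJ hδpJ i
      rwa [← pow_two] at this
    have hvu : IsUnit (v.coeff 0) := by
      rw [hv2, HahnSeries.coeff_add, HahnSeries.coeff_add, HahnSeries.coeff_one, if_pos rfl]
      have hjmem : δp.coeff 0 + (w * δp).coeff 0 ∈ J :=
        add_mem (hδpJ 0) (coeff_mul_mem_left J δp hwJ 0)
      exact IsNilpotent.isUnit_one_add (J_le_nilradical hJ hjmem)
    have hJ2 : (J ^ 2) ^ (k + 1) = ⊥ := by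
      rw [← pow_mul]
      have hle : J ^ (2 * (k+1)) ≤ J ^ (k+2) := Ideal.pow_le_pow_right (by omega)
      rw [hJ] at hle
      exact le_bot_iff.mp hle
    obtain ⟨vm, vp, hvm0, hvmpos, hvmJ2, hvppos, hveq⟩ :=
      IH (k+1) (by omega) (J^2) v hJ2 hvnegJ2 hvu
    have hvmJ : ∀ i : ℤ, i < 0 → vm.coeff i ∈ J := fun i hi =>
      (Ideal.pow_le_self two_ne_zero) (hvmJ2 i hi)
    have he2 : ∀ i : ℤ, 0 ≤ i → (vm - 1).coeff i = 0 := by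
      intro i hi
      rcases eq_or_lt_of_le hi with h0 | h0
      · rw [HahnSeries.coeff_sub, HahnSeries.coeff_one, ← h0, hvm0, if_pos rfl, sub_self]
      · rw [HahnSeries.coeff_sub, HahnSeries.coeff_one, hvmpos i h0, if_neg (by omega), sub_zero]
    have hfm : (1 + δm) * vm = 1 + (δm + (vm - 1) + δm * (vm - 1)) := by ring
    have hE : ∀ i : ℤ, 0 ≤ i → (δm + (vm - 1) + δm * (vm - 1)).coeff i = 0 := by
      intro i hi
      rw [HahnSeries.coeff_add, HahnSeries.coeff_add, hδmneg i hi, he2 i hi,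
        coeff_mul_negsupp hδmneg he2 i hi]
      simp
    have hEJ : ∀ i : ℤ, i < 0 → (δm + (vm - 1) + δm * (vm - 1)).coeff i ∈ J := by
      intro i hi
      rw [HahnSeries.coeff_add, HahnSeries.coeff_add]
      refine add_mem (add_mem (hδmJ i) ?_) (coeff_mul_mem_left J _ hδmJ i)
      rw [HahnSeries.coeff_sub, HahnSeries.coeff_one, if_neg (by omega), sub_zero]
      exact hvmJ i hi
    refine ⟨(1 + δm) * vm, p * vp, ?_, ?_, ?_, ?_, ?_⟩
    · rw [hfm, HahnSeries.coeff_add, HahnSeries.coeff_one, if_pos rfl, hE 0 le_rfl, add_zero]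
    · intro i hi
      rw [hfm, HahnSeries.coeff_add, HahnSeries.coeff_one, if_neg (by omega), hE i (by omega),
        add_zero]
    · intro i hi
      rw [hfm, HahnSeries.coeff_add, HahnSeries.coeff_one, if_neg (by omega), zero_add]
      exact hEJ i hi
    · intro i hi
      exact coeff_mul_nonneg hpneg hvppos i hi
    · have h1δ : (1 + δm) * v = 1 + δ := by rw [hv, ← mul_assoc, hwinv, one_mul]
      calc h = p * (1 + δ) := hhp
        _ = p * ((1 + δm) * v) := by rw [h1δ]
        _ = p * ((1 + δm) * (vm * vp)) := by rw [hveq]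
        _ = ((1 + δm) * vm) * (p * vp) := by ring

lemma nilpotent_leadingCoeff [IsLocalRing A] {x y : HahnSeries ℤ A} (hxy : x * y = 1)
    (hx : x ≠ 0) (hlead : ¬ IsUnit x.leadingCoeff) : IsNilpotent x.leadingCoeff := by
  have hy : y ≠ 0 := by
    rintro rfl
    rw [mul_zero] at hxy
    exact one_ne_zero hxy.symm
  set r := x.order with hr
  set s := y.order with hs
  set c := x.leadingCoeff with hc
  have hcr : x.coeff r = c := leadingCoeff_eq.symm
  have hcne : c ≠ 0 := leadingCoeff_ne_zero.mpr hx
  have hxsupp : ∀ i : ℤ, x.coeff i ≠ 0 → r ≤ i := fun i hi => order_le_of_coeff_ne_zero hi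
  have hysupp : ∀ j : ℤ, y.coeff j ≠ 0 → s ≤ j := fun j hj => order_le_of_coeff_ne_zero hj
  -- r + s ≤ 0
  have hrs0 : r + s ≤ 0 := by
    by_contra hpos
    push_neg at hpos
    have h1 : (x * y).coeff 0 = 1 := by rw [hxy, HahnSeries.coeff_one, if_pos rfl]
    rw [HahnSeries.coeff_mul] at h1
    have h0 : ∀ ij ∈ Finset.antidiagonal x.isPWO_support y.isPWO_support (0 : ℤ),
        x.coeff ij.1 * y.coeff ij.2 = 0 := by
      rintro ⟨i, j⟩ hij
      rw [Finset.mem_addAntidiagonal] at hij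
      obtain ⟨h1', h2', h3'⟩ := hij
      have := hxsupp i ((x.mem_support i).mp h1')
      have := hysupp j ((y.mem_support j).mp h2')
      omega
    rw [Finset.sum_eq_zero h0] at h1
    exact one_ne_zero h1.symm
  have hrs : r + s < 0 := by
    rcases lt_or_eq_of_le hrs0 with h | h
    · exact h
    · exfalso
      have := coeff_mul_order_add_order x y
      rw [hxy, ← hr, ← hs, h, HahnSeries.coeff_one, if_pos rfl] at this
      exact hlead (IsUnit.of_mul_eq_one _ this.symm)
  -- main inductive claim
  have claim : ∀ k : ℕ, (k : ℤ) < -(r + s) → c ^ (k + 1) * y.coeff (s + k) = 0 := by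
    intro k
    induction k using Nat.strong_induction_on with
    | _ k IHk =>
    intro hk
    have hne0 : r + s + k ≠ 0 := by omega
    have hco : (x * y).coeff (r + s + k) = 0 := by
      rw [hxy, HahnSeries.coeff_one, if_neg hne0]
    rw [HahnSeries.coeff_mul] at hco
    have hmul := congrArg (fun t => c ^ k * t) hco
    simp only [Finset.mul_sum, mul_zero] at hmul
    rw [Finset.sum_eq_single ((r : ℤ), (s + k : ℤ))] at hmul
    · rw [hcr] at hmul
      rw [pow_succ]
      calc c ^ k * c * y.coeff (s + k) = c ^ k * (c * y.coeff (s + k)) := by ring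
        _ = 0 := hmul
    · rintro ⟨i, j⟩ hij hne
      rw [Finset.mem_addAntidiagonal] at hij
      obtain ⟨h1', h2', h3'⟩ := hij
      have hi : r ≤ i := hxsupp i ((x.mem_support i).mp h1')
      have hj : s ≤ j := hysupp j ((y.mem_support j).mp h2')
      have hir : r < i := by
        rcases lt_or_eq_of_le hi with h | h
        · exact h
        · exfalso; apply hne; rw [← h] at h3' ⊢; congr 1; omega
      set k' := (j - s).toNat with hk'
      have hk'j : (k' : ℤ) = j - s := by omega
      have hk'k : k' < k := by omega
      have hIH := IHk k' hk'k (by omega)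
      have hsj : s + (k' : ℤ) = j := by omega
      rw [hsj] at hIH
      have hpow : c ^ k = c ^ (k - 1 - k') * c ^ (k' + 1) := by
        rw [← _root_.pow_add]; congr 1; omega
      calc c ^ k * (x.coeff i * y.coeff j)
          = x.coeff i * c ^ (k - 1 - k') * (c ^ (k' + 1) * y.coeff j) := by rw [hpow]; ring
        _ = 0 := by rw [hIH, mul_zero]
    · intro hnotmem
      have : y.coeff (s + k) = 0 := by
        by_contra hyne
        apply hnotmem
        rw [Finset.mem_addAntidiagonal]
        refine ⟨(x.mem_support r).mpr (by rw [hcr]; exact hcne), (y.mem_support _).mpr hyne, by omega⟩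
      rw [this, mul_zero, mul_zero]
  -- conclusion
  set K := (-(r + s)).toNat with hK
  have hKz : (K : ℤ) = -(r + s) := by omega
  have h1 : (x * y).coeff 0 = 1 := by rw [hxy, HahnSeries.coeff_one, if_pos rfl]
  have h0eq : (0 : ℤ) = r + s + K := by omega
  rw [h0eq, HahnSeries.coeff_mul] at h1
  have hmul := congrArg (fun t => c ^ K * t) h1
  simp only [Finset.mul_sum, mul_one] at hmul
  rw [Finset.sum_eq_single ((r : ℤ), (s + K : ℤ))] at hmul
  ·
    rw [hcr] at hmul
    have hnonunit : ¬ IsUnit (c * y.coeff (s + K)) := fun hcu =>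
      hlead (isUnit_of_mul_isUnit_left hcu)
    have hunit : IsUnit (1 - c * y.coeff (s + K)) :=
      IsLocalRing.isUnit_one_sub_self_of_mem_nonunits _ hnonunit
    have hzero : c ^ K * (1 - c * y.coeff (s + K)) = 0 := by
      rw [mul_sub, mul_one, hmul, sub_self]
    refine ⟨K, ?_⟩
    obtain ⟨u, hu⟩ := hunit
    have := congrArg (fun t => t * (↑u⁻¹ : A)) hzero
    simp only [zero_mul] at this
    rw [mul_assoc, ← hu, Units.mul_inv, mul_one] at this
    exact this
  · rintro ⟨i, j⟩ hij hne
    rw [Finset.mem_addAntidiagonal] at hij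
    obtain ⟨h1', h2', h3'⟩ := hij
    have hi : r ≤ i := hxsupp i ((x.mem_support i).mp h1')
    have hj : s ≤ j := hysupp j ((y.mem_support j).mp h2')
    have hir : r < i := by
      rcases lt_or_eq_of_le hi with h | h
      · exact h
      · exfalso; apply hne; rw [← h] at h3' ⊢; congr 1; omega
    set k' := (j - s).toNat with hk'
    have hk'j : (k' : ℤ) = j - s := by omega
    have hk'K : (k' : ℤ) < -(r + s) := by omega
    have hIH := claim k' hk'K
    have hsj : s + (k' : ℤ) = j := by omega
    rw [hsj] at hIH
    have hpow : c ^ K = c ^ (K - 1 - k') * c ^ (k' + 1) := by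
      rw [← _root_.pow_add]; congr 1; omega
    calc c ^ K * (x.coeff i * y.coeff j)
        = x.coeff i * c ^ (K - 1 - k') * (c ^ (k' + 1) * y.coeff j) := by rw [hpow]; ring
      _ = 0 := by rw [hIH, mul_zero]
  · intro hnotmem
    have : y.coeff (s + K) = 0 := by
      by_contra hyne
      apply hnotmem
      rw [Finset.mem_addAntidiagonal]
      refine ⟨(x.mem_support r).mpr (by rw [hcr]; exact hcne), (y.mem_support _).mpr hyne, by omega⟩
    rw [this, mul_zero, mul_zero]

lemma nilpotent_below [IsLocalRing A] :
    ∀ (k : ℕ) (x : HahnSeries ℤ A), IsUnit x → ∀ n : ℤ, IsUnit (x.coeff n) →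
      (∀ i : ℤ, i < n → ¬ IsUnit (x.coeff i)) → n ≤ x.order + k →
      ∀ i : ℤ, i < n → IsNilpotent (x.coeff i) := by
  have : Nontrivial A := inferInstance
  intro k
  induction k with
  | zero =>
    intro x hx n hn hbelow horder i hi
    have : i < x.order := by omega
    rw [HahnSeries.coeff_eq_zero_of_lt_order this]
    exact ⟨1, by simp⟩
  | succ k IHk =>
    intro x hx n hn hbelow horder i hi
    have hx0 : x ≠ 0 := by
      rintro rfl
      rw [HahnSeries.coeff_zero] at hn
      exact not_isUnit_zero hn
    by_cases hcase : n ≤ x.order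
    · have : i < x.order := by omega
      rw [HahnSeries.coeff_eq_zero_of_lt_order this]
      exact ⟨1, by simp⟩
    push_neg at hcase
    set r := x.order with hr
    set c := x.coeff r with hc
    have hlead_nonunit : ¬ IsUnit x.leadingCoeff := by
      rw [leadingCoeff_eq]; exact hbelow _ hcase
    obtain ⟨u, hu⟩ := hx
    have hxy : x * ((↑u⁻¹ : (HahnSeries ℤ A)ˣ) : HahnSeries ℤ A) = 1 := by
      rw [← hu, Units.mul_inv]
    have hnilc : IsNilpotent c := by
      rw [hc, hr, ← leadingCoeff_eq]
      exact nilpotent_leadingCoeff hxy hx0 hlead_nonunit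
    set x' : HahnSeries ℤ A := x - HahnSeries.single r c with hx'
    have hx'co : ∀ j : ℤ, x'.coeff j = if j = r then 0 else x.coeff j := by
      intro j
      rw [hx', HahnSeries.coeff_sub, HahnSeries.coeff_single]
      split
      · rename_i hjr; rw [hjr, ← hc, sub_self]
      · rw [sub_zero]
    have hnr : n ≠ r := by omega
    have hx'n : x'.coeff n = x.coeff n := by rw [hx'co, if_neg hnr]
    have hx'unit : IsUnit x' := by
      have hsnil : IsNilpotent (HahnSeries.single r c : HahnSeries ℤ A) := by
        obtain ⟨K, hK⟩ := hnilc
        exact ⟨K, by rw [HahnSeries.single_pow, hK, HahnSeries.single_eq_zero]⟩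
      have : x' = x + (-(HahnSeries.single r c)) := by rw [hx']; ring
      rw [this]
      exact IsNilpotent.isUnit_add_left_of_commute hsnil.neg (⟨u, hu⟩ : IsUnit x)
        (Commute.all _ _)
    have hx'ne : x' ≠ 0 := by
      intro h0
      have := hx'n
      rw [h0] at this
      exact not_isUnit_zero (by rw [HahnSeries.coeff_zero] at this; rwa [← this] at hn)
    have horder' : r < x'.order := by
      by_contra hle
      push_neg at hle
      have hne := (mt HahnSeries.coeff_order_eq_zero.mp hx'ne)
      rcases lt_or_eq_of_le hle with h | h
      · have : x'.coeff x'.order = 0 := by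
          rw [hx'co, if_neg (by omega)]
          exact HahnSeries.coeff_eq_zero_of_lt_order (by omega)
        exact hne this
      · have : x'.coeff x'.order = 0 := by rw [hx'co, if_pos h]
        exact hne this
    have hb' : ∀ j : ℤ, j < n → ¬ IsUnit (x'.coeff j) := by
      intro j hj
      rw [hx'co]
      split
      · exact not_isUnit_zero
      · exact hbelow j hj
    have hord' : n ≤ x'.order + (k : ℤ) := by
      push_cast at horder
      omega
    have happ := IHk x' hx'unit n (by rwa [hx'n]) hb' hord'
    by_cases hjr : i = r
    · rw [hjr, ← hc]; exact hnilc
    · have := happ i hi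
      rwa [hx'co, if_neg hjr] at this

lemma exists_pivot [IsLocalRing A] {x : HahnSeries ℤ A} (hx : IsUnit x) :
    ∃ n : ℤ, IsUnit (x.coeff n) ∧ (∀ i : ℤ, i < n → IsNilpotent (x.coeff i)) := by
  have hnt : Nontrivial A := inferInstance
  obtain ⟨u, hu⟩ := hx
  have hxy : x * ((↑u⁻¹ : (HahnSeries ℤ A)ˣ) : HahnSeries ℤ A) = 1 := by
    rw [← hu, Units.mul_inv]
  have hex : ∃ i : ℤ, IsUnit (x.coeff i) := by
    by_contra hno
    push_neg at hno
    have h1 : (x * ((↑u⁻¹ : (HahnSeries ℤ A)ˣ) : HahnSeries ℤ A)).coeff 0 = 1 := by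
      rw [hxy, HahnSeries.coeff_one, if_pos rfl]
    rw [HahnSeries.coeff_mul] at h1
    have hmem : (1 : A) ∈ IsLocalRing.maximalIdeal A := by
      rw [← h1]
      exact Submodule.sum_mem _ fun ij _ => Ideal.mul_mem_right _ _ (hno ij.1)
    exact (IsLocalRing.mem_maximalIdeal _).mp hmem isUnit_one
  set T := {i : ℤ | IsUnit (x.coeff i)} with hT
  have hTsub : T ⊆ x.support := fun i hi => by
    rw [HahnSeries.mem_support]; exact hi.ne_zero
  have hTWF : T.IsWF := x.isWF_support.mono hTsub
  have hTne : T.Nonempty := hex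
  set n := hTWF.min hTne with hn
  have hnu : IsUnit (x.coeff n) := hTWF.min_mem hTne
  have hbelow : ∀ i : ℤ, i < n → ¬ IsUnit (x.coeff i) := fun i hlt hiu =>
    hTWF.not_lt_min hTne hiu hlt
  refine ⟨n, hnu, ?_⟩
  have hno : x.order ≤ n := order_le_of_coeff_ne_zero hnu.ne_zero
  exact nilpotent_below (n - x.order).toNat x ⟨u, hu⟩ n hnu hbelow (by omega)

lemma derived_facts [IsLocalRing A] {F : HahnSeries ℤ A} {n : ℤ} {a : Aˣ}
    {fp fm : HahnSeries ℤ A}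
    (h1 : ∀ l : ℤ, l < 0 → fp.coeff l = 0) (h2 : fp.coeff 0 = 1)
    (h3 : ∀ l : ℤ, 0 < l → fm.coeff l = 0) (h4 : fm.coeff 0 = 1)
    (h5 : ∀ l : ℤ, l < 0 → IsNilpotent (fm.coeff l))
    (heq : F = fm * ((a : A) • HahnSeries.single n (1:A)) * fp) :
    IsUnit (F.coeff n) ∧ ∀ i : ℤ, i < n → IsNilpotent (F.coeff i) := by
  have hF2 : F = HahnSeries.single n (↑a : A) * (fm * fp) := by
    rw [heq, smul_single_one]; ring
  have hco : ∀ i : ℤ, F.coeff i = (↑a : A) * (fm * fp).coeff (i - n) := by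
    intro i
    have := HahnSeries.coeff_single_mul_add (r := (↑a : A)) (x := fm * fp) (a := i - n) (b := n)
    rw [show i - n + n = i by ring] at this
    rw [hF2, this]
  have he : ∀ i : ℤ, 0 ≤ i → (fm - 1).coeff i = 0 := by
    intro i hi
    rcases eq_or_lt_of_le hi with h0 | h0
    · rw [HahnSeries.coeff_sub, HahnSeries.coeff_one, ← h0, h4, if_pos rfl, sub_self]
    · rw [HahnSeries.coeff_sub, HahnSeries.coeff_one, h3 i h0, if_neg (by omega), sub_zero]
  have henil : ∀ i : ℤ, (fm - 1).coeff i ∈ nilradical A := by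
    intro i
    rcases lt_or_ge i 0 with hi | hi
    · rw [HahnSeries.coeff_sub, HahnSeries.coeff_one, if_neg (by omega), sub_zero]
      exact mem_nilradical.mpr (h5 i hi)
    · rw [he i hi]; exact zero_mem _
  have hsplit : fm * fp = fp + (fm - 1) * fp := by ring
  have hGnil : ∀ j : ℤ, j < 0 → IsNilpotent ((fm * fp).coeff j) := by
    intro j hj
    rw [hsplit, HahnSeries.coeff_add, h1 j hj, zero_add]
    exact mem_nilradical.mp (coeff_mul_mem_left (nilradical A) fp henil j)
  have hGu : IsUnit ((fm * fp).coeff 0) := by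
    rw [hsplit, HahnSeries.coeff_add, h2]
    exact IsNilpotent.isUnit_one_add (mem_nilradical.mp (coeff_mul_mem_left (nilradical A) fp henil 0))
  constructor
  · rw [hco, show n - n = (0:ℤ) by ring]
    exact (a.isUnit).mul hGu
  · intro i hi
    rw [hco]
    obtain ⟨m0, hm0⟩ := hGnil (i - n) (by omega)
    exact ⟨m0, by rw [mul_pow, hm0, mul_zero]⟩

-- existence
lemma existence [IsLocalRing A] (F : HahnSeries ℤ A) (hF : IsUnit F) :
    ∃ (n : ℤ) (a : Aˣ) (fp fm : HahnSeries ℤ A),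
      (∀ l : ℤ, l < 0 → fp.coeff l = 0) ∧ fp.coeff 0 = 1 ∧
      (∀ l : ℤ, 0 < l → fm.coeff l = 0) ∧ fm.coeff 0 = 1 ∧
      (∀ l : ℤ, l < 0 → IsNilpotent (fm.coeff l)) ∧
      F = fm * ((a : A) • HahnSeries.single n (1 : A)) * fp := by
  classical
  have hnt : Nontrivial A := inferInstance
  obtain ⟨n, hnu, hnil⟩ := exists_pivot hF
  set u := hnu.unit with hu
  have huv : (u : A) = F.coeff n := hnu.unit_spec
  set h : HahnSeries ℤ A := HahnSeries.single (-n) ((↑u⁻¹ : A)) * F with hh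
  have hhco : ∀ i : ℤ, h.coeff i = (↑u⁻¹ : A) * F.coeff (i + n) := by
    intro i
    have := HahnSeries.coeff_single_mul_add (r := (↑u⁻¹ : A)) (x := F) (a := i + n) (b := -n)
    rwa [show (i + n) + (-n) = i by ring] at this
  have hh0 : h.coeff 0 = 1 := by
    rw [hhco, zero_add, ← huv, Units.inv_mul]
  have hhnil : ∀ i : ℤ, i < 0 → IsNilpotent (h.coeff i) := by
    intro i hi
    rw [hhco]
    obtain ⟨m0, hm0⟩ := hnil (i + n) (by omega)
    exact ⟨m0, by rw [mul_pow, hm0, mul_zero]⟩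
  have hfin := finite_neg_support h
  set s : Finset A := hfin.toFinset.image h.coeff with hs
  obtain ⟨m, hm⟩ := span_nilpotent s (by
    intro a ha
    rw [hs, Finset.mem_image] at ha
    obtain ⟨i, hi, rfl⟩ := ha
    rw [Set.Finite.mem_toFinset] at hi
    exact hhnil i hi.1)
  set J := Ideal.span (s : Set A) with hJdef
  have hhJ : ∀ i : ℤ, i < 0 → h.coeff i ∈ J := by
    intro i hi
    by_cases h0 : h.coeff i = 0
    · rw [h0]; exact zero_mem _
    · apply Ideal.subset_span
      simp only [hs, Finset.coe_image, Set.mem_image, Finset.mem_coe, Set.Finite.mem_toFinset]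
      exact ⟨i, ⟨hi, h0⟩, rfl⟩
  obtain ⟨fm, fp, hfm0, hfmpos, hfmJ, hfppos, heq⟩ :=
    factorE m J h hm hhJ (hh0 ▸ isUnit_one)
  have hfm1 : ∀ i : ℤ, 0 ≤ i → (fm - 1).coeff i = 0 := by
    intro i hi
    rcases eq_or_lt_of_le hi with h0 | h0
    · rw [HahnSeries.coeff_sub, HahnSeries.coeff_one, ← h0, hfm0, if_pos rfl, sub_self]
    · rw [HahnSeries.coeff_sub, HahnSeries.coeff_one, hfmpos i h0, if_neg (by omega), sub_zero]
  have hz : IsNilpotent (((fm - 1) * fp).coeff 0) := by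
    refine J_le_nilradical hm (coeff_mul_mem_left J fp ?_ 0)
    intro i
    rcases lt_or_ge i 0 with hi | hi
    · rw [HahnSeries.coeff_sub, HahnSeries.coeff_one, if_neg (by omega), sub_zero]
      exact hfmJ i hi
    · rw [hfm1 i hi]; exact zero_mem _
  have h10 : (1:A) = fp.coeff 0 + ((fm - 1) * fp).coeff 0 := by
    have hsplit : fm * fp = fp + (fm - 1) * fp := by ring
    rw [← HahnSeries.coeff_add, ← hsplit, ← heq, hh0]
  have hfp0 : IsUnit (fp.coeff 0) := by
    have : fp.coeff 0 = 1 - ((fm - 1) * fp).coeff 0 := by rw [h10]; ring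
    rw [this]
    exact hz.isUnit_one_sub
  set b := hfp0.unit with hb
  have hbv : (b : A) = fp.coeff 0 := hfp0.unit_spec
  have hFh : F = HahnSeries.single n (↑u : A) * h := by
    rw [hh, ← mul_assoc, HahnSeries.single_mul_single, show n + -n = (0:ℤ) by ring,
      Units.mul_inv, HahnSeries.single_zero_one, one_mul]
  refine ⟨n, u * b, (↑b⁻¹ : A) • fp, fm, ?_, ?_, hfmpos, hfm0, ?_, ?_⟩
  · intro l hl
    rw [HahnSeries.coeff_smul, hfppos l hl, smul_zero]
  · rw [HahnSeries.coeff_smul, ← hbv, smul_eq_mul, Units.inv_mul]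
  · intro l hl
    exact J_le_nilradical hm (hfmJ l hl)
  · rw [smul_single_one, ← HahnSeries.single_zero_mul_eq_smul]
    have hkey : HahnSeries.single n ((↑(u * b) : A)) * HahnSeries.single (0:ℤ) ((↑b⁻¹ : A))
        = HahnSeries.single n (↑u : A) := by
      rw [HahnSeries.single_mul_single, add_zero, Units.val_mul, mul_assoc, Units.mul_inv,
        mul_one]
    calc F = HahnSeries.single n (↑u : A) * (fm * fp) := by rw [hFh, heq]
      _ = fm * (HahnSeries.single n ((↑(u * b) : A)) * HahnSeries.single (0:ℤ) ((↑b⁻¹ : A))) * fp := by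
          rw [hkey]; ring
      _ = fm * HahnSeries.single n ((↑(u * b) : A)) * (HahnSeries.single (0:ℤ) ((↑b⁻¹ : A)) * fp) := by
          ring

-- uniqueness
lemma uniqueness [IsLocalRing A] {F : HahnSeries ℤ A} {n : ℤ} {a a' : Aˣ}
    {fp fm fp' fm' : HahnSeries ℤ A}
    (h1 : ∀ l : ℤ, l < 0 → fp.coeff l = 0) (h2 : fp.coeff 0 = 1)
    (h3 : ∀ l : ℤ, 0 < l → fm.coeff l = 0) (h4 : fm.coeff 0 = 1)
    (h5 : ∀ l : ℤ, l < 0 → IsNilpotent (fm.coeff l))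
    (heq : F = fm * ((a : A) • HahnSeries.single n (1:A)) * fp)
    (h1' : ∀ l : ℤ, l < 0 → fp'.coeff l = 0) (h2' : fp'.coeff 0 = 1)
    (h3' : ∀ l : ℤ, 0 < l → fm'.coeff l = 0) (h4' : fm'.coeff 0 = 1)
    (h5' : ∀ l : ℤ, l < 0 → IsNilpotent (fm'.coeff l))
    (heq' : F = fm' * ((a' : A) • HahnSeries.single n (1:A)) * fp') :
    a = a' ∧ fp = fp' ∧ fm = fm' := by
  have hnt : Nontrivial A := inferInstance
  set e : HahnSeries ℤ A := fm - 1 with he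
  set e' : HahnSeries ℤ A := fm' - 1 with he'
  have hfm_e : fm = 1 + e := by rw [he]; ring
  have hfm_e' : fm' = 1 + e' := by rw [he']; ring
  have hemk : ∀ (g : HahnSeries ℤ A), g.coeff 0 = 1 → (∀ l : ℤ, 0 < l → g.coeff l = 0) →
      ∀ i : ℤ, 0 ≤ i → (g - 1).coeff i = 0 := by
    intro g hg0 hgpos i hi
    rcases eq_or_lt_of_le hi with h0 | h0
    · rw [HahnSeries.coeff_sub, HahnSeries.coeff_one, ← h0, hg0, if_pos rfl, sub_self]
    · rw [HahnSeries.coeff_sub, HahnSeries.coeff_one, hgpos i h0, if_neg (by omega), sub_zero]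
  have heneg : ∀ i : ℤ, 0 ≤ i → e.coeff i = 0 := hemk fm h4 h3
  have heneg' : ∀ i : ℤ, 0 ≤ i → e'.coeff i = 0 := hemk fm' h4' h3'
  have henilco : ∀ i : ℤ, IsNilpotent (e.coeff i) := by
    intro i
    rcases lt_or_ge i 0 with hi | hi
    · rw [he, HahnSeries.coeff_sub, HahnSeries.coeff_one, if_neg (by omega), sub_zero]
      exact h5 i hi
    · rw [heneg i hi]; exact ⟨1, by simp⟩
  have henilco' : ∀ i : ℤ, IsNilpotent (e'.coeff i) := by
    intro i
    rcases lt_or_ge i 0 with hi | hi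
    · rw [he', HahnSeries.coeff_sub, HahnSeries.coeff_one, if_neg (by omega), sub_zero]
      exact h5' i hi
    · rw [heneg' i hi]; exact ⟨1, by simp⟩
  have henil' : IsNilpotent e' := by
    apply isNilpotent_of_coeff (Set.Finite.subset (finite_neg_support e') ?_) henilco'
    intro i hi
    rw [HahnSeries.mem_support] at hi
    refine ⟨?_, hi⟩
    by_contra hge
    exact hi (heneg' i (by omega))
  obtain ⟨w', hw'neg, hw'inv, _⟩ := exists_inv_one_add_neg heneg' henil'
  -- step 1 : the basic equation
  have hsn : ∀ c : A, HahnSeries.single n c * HahnSeries.single (-n) (1:A)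
      = HahnSeries.single (0:ℤ) c := by
    intro c
    rw [HahnSeries.single_mul_single, show n + -n = (0:ℤ) by ring, mul_one]
  have E : fm * HahnSeries.single n ((a:A)) * fp = fm' * HahnSeries.single n ((a':A)) * fp' := by
    have hE := heq.symm.trans heq'
    rw [smul_single_one, smul_single_one] at hE
    exact hE
  have E1 : HahnSeries.single (0:ℤ) (↑a : A) * (fm * fp)
      = HahnSeries.single (0:ℤ) (↑a' : A) * (fm' * fp') := by
    have hE2 := congrArg (fun X => X * HahnSeries.single (-n) (1:A)) E
    calc HahnSeries.single (0:ℤ) (↑a : A) * (fm * fp)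
        = fm * HahnSeries.single n ((a:A)) * fp * HahnSeries.single (-n) (1:A) := by
          rw [← hsn]; ring
      _ = fm' * HahnSeries.single n ((a':A)) * fp' * HahnSeries.single (-n) (1:A) := hE2
      _ = HahnSeries.single (0:ℤ) (↑a' : A) * (fm' * fp') := by rw [← hsn]; ring
  -- step 2 : multiply by the inverse of fm'
  set z : HahnSeries ℤ A := w' + e + w' * e with hzdef
  have hzneg : ∀ i : ℤ, 0 ≤ i → z.coeff i = 0 := by
    intro i hi
    rw [hzdef, HahnSeries.coeff_add, HahnSeries.coeff_add, hw'neg i hi, heneg i hi,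
      coeff_mul_negsupp hw'neg heneg i hi]
    simp
  have hw'fm : (1 + w') * fm' = 1 := by
    rw [hfm_e', mul_comm]; exact hw'inv
  have E3 : HahnSeries.single (0:ℤ) (↑a : A) * fp + HahnSeries.single (0:ℤ) (↑a : A) * (z * fp)
      = HahnSeries.single (0:ℤ) (↑a' : A) * fp' := by
    have hexp : (1 + w') * (fm * fp) = fp + z * fp := by
      rw [hfm_e, hzdef]; ring
    calc HahnSeries.single (0:ℤ) (↑a : A) * fp + HahnSeries.single (0:ℤ) (↑a : A) * (z * fp)
        = (1 + w') * (HahnSeries.single (0:ℤ) (↑a : A) * (fm * fp)) := by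
          rw [show (1 + w') * (HahnSeries.single (0:ℤ) (↑a : A) * (fm * fp))
              = HahnSeries.single (0:ℤ) (↑a : A) * ((1 + w') * (fm * fp)) by ring, hexp]
          ring
      _ = (1 + w') * (HahnSeries.single (0:ℤ) (↑a' : A) * (fm' * fp')) := by rw [E1]
      _ = HahnSeries.single (0:ℤ) (↑a' : A) * (((1 + w') * fm') * fp') := by ring
      _ = HahnSeries.single (0:ℤ) (↑a' : A) * fp' := by rw [hw'fm, one_mul]
  -- step 3 : z = 0
  have hfpne : fp ≠ 0 := fun h0 => by
    rw [h0, HahnSeries.coeff_zero] at h2; exact one_ne_zero h2.symm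
  have hfpord : fp.order = 0 := by
    apply le_antisymm
    · exact order_le_of_coeff_ne_zero (h2 ▸ one_ne_zero)
    · by_contra hlt
      push_neg at hlt
      exact (mt HahnSeries.coeff_order_eq_zero.mp hfpne) (h1 _ hlt)
  have hz0 : z = 0 := by
    by_contra hzne
    have hordz : z.order < 0 := by
      by_contra hge
      push_neg at hge
      exact (mt HahnSeries.coeff_order_eq_zero.mp hzne) (hzneg _ hge)
    have hlead : (z * fp).coeff z.order = z.leadingCoeff := by
      have hfl : fp.leadingCoeff = 1 := by rw [leadingCoeff_eq, hfpord, h2]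
      have := HahnSeries.coeff_mul_order_add_order z fp
      rw [hfpord, add_zero, hfl, mul_one] at this
      exact this
    have hcoeff := congrArg (fun X : HahnSeries ℤ A => X.coeff z.order) E3
    simp only [HahnSeries.coeff_add, HahnSeries.coeff_single_zero_mul] at hcoeff
    rw [h1 _ hordz, h1' _ hordz, mul_zero, zero_add, mul_zero, hlead] at hcoeff
    have : z.leadingCoeff = 0 := by
      calc z.leadingCoeff = (↑a⁻¹ : A) * ((↑a : A) * z.leadingCoeff) := by
            rw [← mul_assoc, Units.inv_mul, one_mul]
        _ = 0 := by rw [hcoeff, mul_zero]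
    exact (leadingCoeff_ne_zero.mpr hzne) this
  -- step 4 : conclusions
  have hfmeq : fm = fm' := by
    have h1z : (1 + w') * fm = 1 := by
      have : (1 + w') * fm = 1 + z := by rw [hfm_e, hzdef]; ring
      rw [this, hz0, add_zero]
    calc fm = (fm' * (1 + w')) * fm := by rw [mul_comm fm' (1 + w'), hw'fm, one_mul]
      _ = fm' * ((1 + w') * fm) := by ring
      _ = fm' := by rw [h1z, mul_one]
  have E4 : HahnSeries.single (0:ℤ) (↑a : A) * fp = HahnSeries.single (0:ℤ) (↑a' : A) * fp' := by
    have h := E3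
    rw [hz0, zero_mul, mul_zero, add_zero] at h
    exact h
  have haa : a = a' := by
    have hcoeff := congrArg (fun X : HahnSeries ℤ A => X.coeff 0) E4
    simp only [HahnSeries.coeff_single_zero_mul] at hcoeff
    rw [h2, h2', mul_one, mul_one] at hcoeff
    exact Units.ext hcoeff
  subst haa
  refine ⟨rfl, ?_, hfmeq⟩
  have h := congrArg (fun X => HahnSeries.single (0:ℤ) ((↑a⁻¹ : A)) * X) E4
  rwa [← mul_assoc, ← mul_assoc, HahnSeries.single_mul_single, add_zero, Units.inv_mul,
    HahnSeries.single_zero_one, one_mul, one_mul] at h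

end LaurentFactor

/-- unique factorization of invertible Laurent series over a local ring:
`f = f₋ · (a · tⁿ) · f₊` with `a ∈ Aˣ`, `f₊ = 1 + Σ_{l>0} a_l t^l`,
`f₋ = 1 + Σ_{l<0} a_l t^l` with nilpotent coefficients. -/
theorem laurent_units_unique_factorization (A : Type*) [CommRing A] [IsLocalRing A]
    (f : (LaurentSeries A)ˣ) :
    ∃! q : ℤ × Aˣ × LaurentSeries A × LaurentSeries A,
      (∀ l : ℤ, l < 0 → q.2.2.1.coeff l = 0) ∧ q.2.2.1.coeff 0 = 1 ∧
      (∀ l : ℤ, 0 < l → q.2.2.2.coeff l = 0) ∧ q.2.2.2.coeff 0 = 1 ∧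
      (∀ l : ℤ, l < 0 → IsNilpotent (q.2.2.2.coeff l)) ∧
      (f : LaurentSeries A) =
        q.2.2.2 * ((q.2.1 : A) • (HahnSeries.single q.1 (1 : A))) * q.2.2.1 := by
  classical
  have hnt : Nontrivial A := inferInstance
  obtain ⟨n, a, fp, fm, c1, c2, c3, c4, c5, c6⟩ :=
    LaurentFactor.existence (A := A) (f : LaurentSeries A) f.isUnit
  refine ⟨(n, a, fp, fm), ⟨c1, c2, c3, c4, c5, c6⟩, ?_⟩
  rintro ⟨n', a', fp', fm'⟩ ⟨d1, d2, d3, d4, d5, d6⟩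
  dsimp only at d1 d2 d3 d4 d5 d6 ⊢
  obtain ⟨hu1, hn1⟩ := LaurentFactor.derived_facts c1 c2 c3 c4 c5 c6
  obtain ⟨hu2, hn2⟩ := LaurentFactor.derived_facts d1 d2 d3 d4 d5 d6
  have hnn : n' = n := by
    rcases lt_trichotomy n' n with h | h | h
    · exact absurd (hn1 n' h) hu2.not_isNilpotent
    · exact h
    · exact absurd (hn2 n h) hu1.not_isNilpotent
  subst hnn
  obtain ⟨ha, hp, hm⟩ := LaurentFactor.uniqueness d1 d2 d3 d4 d5 d6 c1 c2 c3 c4 c5 c6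
  rw [ha, hp, hm]
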